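/- Let α₁, α₃ > 0, α₂ ∈ ℝ, μ < 3. Then there exists a constant C (independent of v) such that for all v ∈ ℝ³, ∫_{ℝ³} |v−u|^{−μ} exp(−α₁|v−u|²) exp(−α₃(((v−u)·v)/|v−u| − α₂|v−u|)²) du ≤ C. -/

import Mathlib

open MeasureTheory
open scoped RealInnerProductSpace ENNReal

open Set Metric in
private lemma lintegral_norm_E3 (f : ℝ → ℝ≥0∞) (hf : Measurable f) :
    ∫⁻ x : EuclideanSpace ℝ (Fin 3), f ‖x‖ =
      (volume : Measure (EuclideanSpace ℝ (Fin 3))).toSphere univ *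
        ∫⁻ y in Ioi (0 : ℝ), ENNReal.ofReal (y ^ 2) * f y := by
  have hdim : Module.finrank ℝ (EuclideanSpace ℝ (Fin 3)) - 1 = 2 := by
    simp [finrank_euclideanSpace]
  calc
    ∫⁻ x : EuclideanSpace ℝ (Fin 3), f ‖x‖
        = ∫⁻ x in ({0}ᶜ : Set (EuclideanSpace ℝ (Fin 3))), f ‖x‖ := by
          rw [restrict_compl_singleton]
    _ = ∫⁻ x : ({0}ᶜ : Set (EuclideanSpace ℝ (Fin 3))), f ‖x.1‖
          ∂(volume.comap Subtype.val) :=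
          (lintegral_subtype_comap (measurableSet_singleton _).compl _).symm
    _ = ∫⁻ p : Metric.sphere (0 : EuclideanSpace ℝ (Fin 3)) 1 × Ioi (0 : ℝ),
          (f ∘ Subtype.val ∘ Prod.snd) p
          ∂((volume : Measure (EuclideanSpace ℝ (Fin 3))).toSphere.prod
            (Measure.volumeIoiPow 2)) := by
          rw [← hdim]
          refine Eq.trans (lintegral_congr fun x => ?_) ((Measure.measurePreserving_homeomorphUnitSphereProd
            (volume : Measure (EuclideanSpace ℝ (Fin 3)))).lintegral_comp_emb
            (Homeomorph.measurableEmbedding _) (f ∘ Subtype.val ∘ Prod.snd))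
          simp [homeomorphUnitSphereProd_apply_snd_coe]
    _ = (volume : Measure (EuclideanSpace ℝ (Fin 3))).toSphere univ *
          ∫⁻ y : Ioi (0 : ℝ), f y ∂(Measure.volumeIoiPow 2) := by
          rw [lintegral_prod _ ((hf.comp (measurable_subtype_coe.comp
            measurable_snd)).aemeasurable)]
          simp [lintegral_const]
          ring
    _ = _ := by
          rw [Measure.volumeIoiPow, lintegral_withDensity_eq_lintegral_mul _
            (by fun_prop)
              (show Measurable fun y : Ioi (0:ℝ) => f ↑y from hf.comp measurable_subtype_coe),
            ← lintegral_subtype_comap measurableSet_Ioi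
              (fun y => ENNReal.ofReal (y ^ 2) * f y)]
          rfl

open Set in
private lemma integrable_g (α₁ μ : ℝ) (hα₁ : 0 < α₁) (hμ : μ < 3) :
    Integrable (fun u : EuclideanSpace ℝ (Fin 3) =>
      ‖u‖ ^ (-μ) * Real.exp (-α₁ * ‖u‖ ^ 2)) := by
  have hfm : Measurable fun y : ℝ => ENNReal.ofReal (y ^ (-μ) * Real.exp (-α₁ * y ^ 2)) := by
    apply Measurable.ennreal_ofReal
    exact by fun_prop
  have hmeas : Measurable fun u : EuclideanSpace ℝ (Fin 3) =>
      ‖u‖ ^ (-μ) * Real.exp (-α₁ * ‖u‖ ^ 2) :=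
    by fun_prop
  refine ⟨hmeas.aestronglyMeasurable, ?_⟩
  rw [hasFiniteIntegral_iff_ofReal (ae_of_all _ fun u => by positivity)]
  have key := lintegral_norm_E3 (fun y => ENNReal.ofReal (y ^ (-μ) * Real.exp (-α₁ * y ^ 2))) hfm
  rw [key]
  have hIntOn : IntegrableOn (fun y : ℝ => y ^ (2 - μ) * Real.exp (-α₁ * y ^ 2)) (Ioi 0) :=
    integrableOn_rpow_mul_exp_neg_mul_sq hα₁ (by linarith)
  refine ENNReal.mul_lt_top (measure_lt_top _ _) ?_
  have heq : ∫⁻ y in Ioi (0 : ℝ),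
      ENNReal.ofReal (y ^ 2) * ENNReal.ofReal (y ^ (-μ) * Real.exp (-α₁ * y ^ 2)) =
      ∫⁻ y in Ioi (0 : ℝ), ENNReal.ofReal (y ^ (2 - μ) * Real.exp (-α₁ * y ^ 2)) := by
    refine setLIntegral_congr_fun measurableSet_Ioi (fun y hy => ?_)
    rw [← ENNReal.ofReal_mul (by positivity)]
    congr 1
    have hy0 : (0 : ℝ) < y := hy
    rw [← mul_assoc]
    congr 1
    rw [show (2 : ℝ) - μ = (2 : ℕ) + (-μ) by push_cast; ring,
      Real.rpow_add hy0, Real.rpow_natCast]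
  rw [heq]
  calc ∫⁻ y in Ioi (0 : ℝ), ENNReal.ofReal (y ^ (2 - μ) * Real.exp (-α₁ * y ^ 2))
      ≤ ∫⁻ y in Ioi (0 : ℝ), ‖y ^ (2 - μ) * Real.exp (-α₁ * y ^ 2)‖₊ :=
        lintegral_ofReal_le_lintegral_enorm _
    _ < ⊤ := hIntOn.2

theorem caflisch_estimate_bounded (α₁ α₃ : ℝ) (hα₁ : 0 < α₁) (hα₃ : 0 < α₃) (α₂ μ : ℝ)
    (hμ : μ < 3) :
    ∃ C : ℝ, ∀ v : EuclideanSpace ℝ (Fin 3),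
      (∫ u : EuclideanSpace ℝ (Fin 3),
          ‖v - u‖ ^ (-μ) * Real.exp (-α₁ * ‖v - u‖ ^ 2) *
            Real.exp (-α₃ * (⟪v - u, v⟫ / ‖v - u‖ - α₂ * ‖v - u‖) ^ 2))
        ≤ C := by
  set g : EuclideanSpace ℝ (Fin 3) → ℝ :=
    fun u => ‖u‖ ^ (-μ) * Real.exp (-α₁ * ‖u‖ ^ 2) with hgdef
  have hgint : Integrable g := integrable_g α₁ μ hα₁ hμ
  refine ⟨∫ u, g u, fun v => ?_⟩
  have hint : Integrable fun u => g (v - u) := hgint.comp_sub_left v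
  have hle : ∀ u : EuclideanSpace ℝ (Fin 3),
      ‖v - u‖ ^ (-μ) * Real.exp (-α₁ * ‖v - u‖ ^ 2) *
        Real.exp (-α₃ * (⟪v - u, v⟫ / ‖v - u‖ - α₂ * ‖v - u‖) ^ 2) ≤ g (v - u) := by
    intro u
    have h1 : Real.exp (-α₃ * (⟪v - u, v⟫ / ‖v - u‖ - α₂ * ‖v - u‖) ^ 2) ≤ 1 := by
      rw [Real.exp_le_one_iff]
      have := sq_nonneg (⟪v - u, v⟫ / ‖v - u‖ - α₂ * ‖v - u‖)
      nlinarith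
    calc ‖v - u‖ ^ (-μ) * Real.exp (-α₁ * ‖v - u‖ ^ 2) *
          Real.exp (-α₃ * (⟪v - u, v⟫ / ‖v - u‖ - α₂ * ‖v - u‖) ^ 2)
        ≤ ‖v - u‖ ^ (-μ) * Real.exp (-α₁ * ‖v - u‖ ^ 2) * 1 := by
          apply mul_le_mul_of_nonneg_left h1 (by positivity)
      _ = g (v - u) := mul_one _
  calc (∫ u : EuclideanSpace ℝ (Fin 3),
          ‖v - u‖ ^ (-μ) * Real.exp (-α₁ * ‖v - u‖ ^ 2) *
            Real.exp (-α₃ * (⟪v - u, v⟫ / ‖v - u‖ - α₂ * ‖v - u‖) ^ 2))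
      ≤ ∫ u, g (v - u) :=
        integral_mono_of_nonneg (ae_of_all _ fun u => by positivity) hint (ae_of_all _ hle)
    _ = ∫ u, g u := integral_sub_left_eq_self g volume v
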